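/- In the DFA A on n ≥ 3 states with symbols a,b,c,d,e: for every state q, qab = qc, qbb = qb, qcb = qc, qdb = qbc and qeb = qbc. Consequently, in any word over {a,b,c,d,e}, every occurrence of a factor xb with x ∈ {d,e} can be replaced by bc without changing the image of any state, and without changing the word length. -/

import Mathlib

/-- Apply a word (list of transition functions) to a state, left to right. -/
def applyWord {α : Type*} (w : List (α → α)) (q : α) : α :=
  w.foldl (fun s f => f s) q

/- Symbols of the DFA `A` on `Fin n` (state `i+1` of `{1,...,n}` is index `i`,
`n+1` interpreted as `1`, i.e. addition cyclic). -/
def mapA (n : ℕ) [NeZero n] : Fin n → Fin n := fun q => q + 1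
def mapB (n : ℕ) [NeZero n] : Fin n → Fin n := fun q =>
  if q = 0 then 0 else if q = 1 then 2 else if q = 2 then 2 else q
def mapC (n : ℕ) [NeZero n] : Fin n → Fin n := fun q =>
  if q = 0 then 2 else if q = 1 then 2 else q + 1
def mapD (n : ℕ) [NeZero n] : Fin n → Fin n := fun q =>
  if q = 0 then 1 else if q = 1 then 3 else if q = 2 then 3 else q + 1
def mapE (n : ℕ) [NeZero n] : Fin n → Fin n := fun q =>
  if q = 0 then 2 else if q = 1 then 3 else if q = 2 then 3 else q + 1

lemma e1'' (n : ℕ) (hn : 3 ≤ n) [NeZero n] : ((1:Fin n):ℕ) = 1 := by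
  rw [show ((1:Fin n):ℕ) = 1 % n from rfl, Nat.mod_eq_of_lt (by omega)]
lemma e2'' (n : ℕ) (hn : 3 ≤ n) [NeZero n] : ((2:Fin n):ℕ) = 2 := by
  rw [show ((2:Fin n):ℕ) = 2 % n from rfl, Nat.mod_eq_of_lt (by omega)]

lemma eA' (n : ℕ) [NeZero n] (q : Fin n) :
    (q.val+1) % n = q.val+1 ∨ (q.val+1 = n ∧ (q.val+1) % n = 0) := by
  rcases Nat.lt_or_ge (q.val+1) n with h|h
  · exact Or.inl (Nat.mod_eq_of_lt h)
  · have h' : q.val + 1 = n := by have := q.isLt; omega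
    exact Or.inr ⟨h', by rw [h', Nat.mod_self]⟩
lemma stmt4three : ∀ p : Fin 3, mapB 3 (mapD 3 p) = mapC 3 (mapB 3 p) := by decide
lemma stmt5three : ∀ p : Fin 3, mapB 3 (mapE 3 p) = mapC 3 (mapB 3 p) := by decide

lemma stmt4 (n : ℕ) (hn : 3 ≤ n) [NeZero n] (q : Fin n) :
    mapB n (mapD n q) = mapC n (mapB n q) := by
  rcases eq_or_lt_of_le hn with h3|h3
  · subst h3; exact stmt4three q
  · have hqlt := q.isLt
    have h1n : (1:ℕ) % n = 1 := Nat.mod_eq_of_lt (by omega)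
    have h2n : (2:ℕ) % n = 2 := Nat.mod_eq_of_lt (by omega)
    have e3n : (3:ℕ) % n = 3 := Nat.mod_eq_of_lt h3
    have e0 : ((0:Fin n):ℕ) = 0 := rfl
    have e1 : ((1:Fin n):ℕ) = 1 := by rw [show ((1:Fin n):ℕ) = 1 % n from rfl, h1n]
    have e2 : ((2:Fin n):ℕ) = 2 := by rw [show ((2:Fin n):ℕ) = 2 % n from rfl, h2n]
    have e3 : ((3:Fin n):ℕ) = 3 := by rw [show ((3:Fin n):ℕ) = 3 % n from rfl, e3n]
    simp only [mapB, mapC, mapD]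
    rcases eA' n q with hA|⟨hA1,hA⟩ <;> split_ifs <;>
      first
        | (exact absurd rfl (by assumption))
        | (simp_all [Fin.ext_iff, Fin.val_add, -Fin.val_eq_zero_iff,
            Nat.mod_eq_of_lt (show (1:ℕ) < n from by omega),
            Nat.mod_eq_of_lt (show (2:ℕ) < n from by omega),
            Nat.mod_eq_of_lt (show (3:ℕ) < n from by omega)] <;> omega)

lemma stmt5 (n : ℕ) (hn : 3 ≤ n) [NeZero n] (q : Fin n) :
    mapB n (mapE n q) = mapC n (mapB n q) := by
  rcases eq_or_lt_of_le hn with h3|h3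
  · subst h3; exact stmt5three q
  · have hqlt := q.isLt
    have h1n : (1:ℕ) % n = 1 := Nat.mod_eq_of_lt (by omega)
    have h2n : (2:ℕ) % n = 2 := Nat.mod_eq_of_lt (by omega)
    have e3n : (3:ℕ) % n = 3 := Nat.mod_eq_of_lt h3
    have e0 : ((0:Fin n):ℕ) = 0 := rfl
    have e1 : ((1:Fin n):ℕ) = 1 := by rw [show ((1:Fin n):ℕ) = 1 % n from rfl, h1n]
    have e2 : ((2:Fin n):ℕ) = 2 := by rw [show ((2:Fin n):ℕ) = 2 % n from rfl, h2n]
    have e3 : ((3:Fin n):ℕ) = 3 := by rw [show ((3:Fin n):ℕ) = 3 % n from rfl, e3n]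
    simp only [mapB, mapC, mapE]
    rcases eA' n q with hA|⟨hA1,hA⟩ <;> split_ifs <;>
      first
        | (exact absurd rfl (by assumption))
        | (simp_all [Fin.ext_iff, Fin.val_add, -Fin.val_eq_zero_iff,
            Nat.mod_eq_of_lt (show (1:ℕ) < n from by omega),
            Nat.mod_eq_of_lt (show (2:ℕ) < n from by omega),
            Nat.mod_eq_of_lt (show (3:ℕ) < n from by omega)] <;> omega)

lemma stmt1 (n : ℕ) (hn : 3 ≤ n) [NeZero n] (q : Fin n) : mapB n (mapA n q) = mapC n q := by
  have hqlt := q.isLt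
  have e0 : ((0:Fin n):ℕ) = 0 := rfl
  have e1 := e1'' n hn; have e2 := e2'' n hn
  simp only [mapA, mapB, mapC]
  rcases eA' n q with hA|⟨hA1,hA⟩ <;>
    split_ifs <;> simp_all [Fin.ext_iff, Fin.val_add, -Fin.val_eq_zero_iff] <;> (try split_ifs) <;> simp_all [Fin.ext_iff, Fin.val_add, -Fin.val_eq_zero_iff] <;> omega

lemma stmt2 (n : ℕ) (hn : 3 ≤ n) [NeZero n] (q : Fin n) : mapB n (mapB n q) = mapB n q := by
  have hqlt := q.isLt
  have e0 : ((0:Fin n):ℕ) = 0 := rfl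
  have e1 := e1'' n hn; have e2 := e2'' n hn
  simp only [mapB]
  split_ifs <;> simp_all [Fin.ext_iff, -Fin.val_eq_zero_iff] <;> omega

lemma stmt3 (n : ℕ) (hn : 3 ≤ n) [NeZero n] (q : Fin n) : mapB n (mapC n q) = mapC n q := by
  have hqlt := q.isLt
  have e0 : ((0:Fin n):ℕ) = 0 := rfl
  have e1 := e1'' n hn; have e2 := e2'' n hn
  simp only [mapB, mapC]
  rcases eA' n q with hA|⟨hA1,hA⟩ <;>
    split_ifs <;> simp_all [Fin.ext_iff, Fin.val_add, -Fin.val_eq_zero_iff] <;> omega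

/-- in `A` (n ≥ 3): `qab = qc`, `qbb = qb`, `qcb = qc`, `qdb = qbc`,
`qeb = qbc` for every state `q`; consequently every factor `xb` with `x ∈ {d,e}`
may be replaced by `bc` without changing the image of any state or the word length. -/
theorem factor_replacement (n : ℕ) (hn : 3 ≤ n) [NeZero n] :
    (∀ q : Fin n,
      mapB n (mapA n q) = mapC n q ∧
      mapB n (mapB n q) = mapB n q ∧
      mapB n (mapC n q) = mapC n q ∧
      mapB n (mapD n q) = mapC n (mapB n q) ∧
      mapB n (mapE n q) = mapC n (mapB n q)) ∧
    ∀ x : Fin n → Fin n, (x = mapD n ∨ x = mapE n) →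
      ∀ u v : List (Fin n → Fin n),
        (u ++ [x, mapB n] ++ v).length = (u ++ [mapB n, mapC n] ++ v).length ∧
        ∀ q : Fin n,
          applyWord (u ++ [x, mapB n] ++ v) q = applyWord (u ++ [mapB n, mapC n] ++ v) q := by
  constructor
  · intro q
    exact ⟨stmt1 n hn q, stmt2 n hn q, stmt3 n hn q, stmt4 n hn q, stmt5 n hn q⟩
  · intro x hx u v
    constructor
    · simp [List.length_append]
    · intro q
      simp only [applyWord, List.foldl_append, List.foldl_cons, List.foldl_nil]
      congr 1
      rcases hx with rfl|rfl
      · exact stmt4 n hn (u.foldl (fun s f => f s) q)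
      · exact stmt5 n hn (u.foldl (fun s f => f s) q)
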